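/- For q ≥ 2 and real numbers k ≥ c ≥ 0, we have (c+k)^q + (k−c)^q ≥ 2k^q + c^q. -/
import Mathlib

open Real

private lemma stmt10_superadd (p a b : ℝ) (hp : 1 ≤ p) (ha : 0 ≤ a) (hb : 0 ≤ b) :
    a ^ p + b ^ p ≤ (a + b) ^ p := by
  have hp0 : p ≠ 0 := by linarith
  rcases eq_or_lt_of_le ha with h | h
  · rw [← h, Real.zero_rpow hp0, zero_add, zero_add]
  rcases eq_or_lt_of_le hb with h' | h'
  · rw [← h', Real.zero_rpow hp0, add_zero, add_zero]
  have hab : 0 < a + b := by linarith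
  have ea : a ^ p = a ^ (p - 1) * a := by
    nth_rewrite 1 [show p = (p - 1) + 1 by ring]
    rw [Real.rpow_add h, Real.rpow_one]
  have eb : b ^ p = b ^ (p - 1) * b := by
    nth_rewrite 1 [show p = (p - 1) + 1 by ring]
    rw [Real.rpow_add h', Real.rpow_one]
  have eab : (a + b) ^ p = (a + b) ^ (p - 1) * (a + b) := by
    nth_rewrite 1 [show p = (p - 1) + 1 by ring]
    rw [Real.rpow_add hab, Real.rpow_one]
  have la : a ^ (p - 1) ≤ (a + b) ^ (p - 1) :=
    Real.rpow_le_rpow ha (by linarith) (by linarith)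
  have lb : b ^ (p - 1) ≤ (a + b) ^ (p - 1) :=
    Real.rpow_le_rpow hb (by linarith) (by linarith)
  rw [ea, eb, eab]
  nlinarith

private lemma stmt10_aux (q k : ℝ) (hq : 2 ≤ q) :
    MonotoneOn (fun x : ℝ => (x + k) ^ q + (k - x) ^ q - x ^ q) (Set.Icc 0 k) := by
  have hq1 : (1:ℝ) ≤ q := le_trans one_le_two hq
  have hdiff : ∀ x : ℝ, HasDerivAt (fun x : ℝ => (x + k) ^ q + (k - x) ^ q - x ^ q)
      (1 * q * (x + k) ^ (q - 1) + (-1) * q * (k - x) ^ (q - 1) - 1 * q * x ^ (q - 1)) x := by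
    intro x
    have h1 : HasDerivAt (fun x : ℝ => (x + k) ^ q) (1 * q * (x + k) ^ (q - 1)) x :=
      ((hasDerivAt_id x).add_const k).rpow_const (Or.inr hq1)
    have h2 : HasDerivAt (fun x : ℝ => (k - x) ^ q) ((-1) * q * (k - x) ^ (q - 1)) x :=
      ((hasDerivAt_id x).const_sub k).rpow_const (Or.inr hq1)
    have h3 : HasDerivAt (fun x : ℝ => x ^ q) (1 * q * x ^ (q - 1)) x :=
      (hasDerivAt_id x).rpow_const (Or.inr hq1)
    exact (h1.add h2).sub h3
  apply monotoneOn_of_deriv_nonneg (convex_Icc 0 k)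
  · exact (Differentiable.continuous (fun x => (hdiff x).differentiableAt)).continuousOn
  · exact fun x _ => ((hdiff x).differentiableAt).differentiableWithinAt
  · intro x hx
    rw [interior_Icc] at hx
    rw [(hdiff x).deriv]
    have hx0 : 0 ≤ x := le_of_lt hx.1
    have hxk : 0 ≤ k - x := by linarith [hx.2]
    have hq0 : 0 ≤ q := by linarith
    have key : (k - x) ^ (q - 1) + x ^ (q - 1) ≤ (x + k) ^ (q - 1) := by
      have h1 : (k - x) ^ (q - 1) + x ^ (q - 1) ≤ ((k - x) + x) ^ (q - 1) :=
        stmt10_superadd (q-1) (k-x) x (by linarith) hxk hx0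
      have h2 : ((k - x) + x) ^ (q - 1) ≤ (x + k) ^ (q - 1) := by
        apply Real.rpow_le_rpow (by linarith) (by linarith) (by linarith)
      linarith
    nlinarith [key, hq0]

/-- For `q ≥ 2` and `k ≥ c ≥ 0`: `(c+k)^q + (k-c)^q ≥ 2k^q + c^q`. -/
theorem stmt10 (q k c : ℝ) (hq : 2 ≤ q) (hc : 0 ≤ c) (hck : c ≤ k) :
    (c + k) ^ q + (k - c) ^ q ≥ 2 * k ^ q + c ^ q := by
  have hk : 0 ≤ k := le_trans hc hck
  have h := stmt10_aux q k hq (Set.mem_Icc.mpr ⟨le_refl 0, hk⟩)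
      (Set.mem_Icc.mpr ⟨hc, hck⟩) hc
  simp only [zero_add, sub_zero] at h
  have h0 : (0:ℝ) ^ q = 0 := Real.zero_rpow (by linarith)
  rw [h0] at h
  linarith
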